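/- Let U be a graph such that both U and its complement are claw-free. If U contains a triangle A and a 3-element independent set B with exactly one vertex in common, then the subgraph induced by U on A ∪ B (a 5-element set) is isomorphic to the bull B5. -/

import Mathlib

open SimpleGraph

/-- The claw `K_{1,3}`: vertex 0 joined to each of the pairwise
    nonadjacent vertices 1, 2, 3. -/
def claw : SimpleGraph (Fin 4) := SimpleGraph.fromRel (fun a _ => a = 0)

/-- A graph is claw-free if it has no induced subgraph isomorphic to `K_{1,3}`. -/
def ClawFree {V : Type*} (G : SimpleGraph V) : Prop := IsEmpty (claw ↪g G)

/-- The bull `B5`: a triangle 0,1,2 with pendant edges 3–1 and 4–2. -/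
def B5 : SimpleGraph (Fin 5) := SimpleGraph.fromRel (fun a b =>
  (a = 0 ∧ b = 1) ∨ (a = 0 ∧ b = 2) ∨ (a = 1 ∧ b = 2) ∨
  (a = 3 ∧ b = 1) ∨ (a = 4 ∧ b = 2))

/-- The graph `E6`: a 4-cycle 0,1,2,3 together with a vertex 4 adjacent exactly
    to 0 and 3 and a vertex 5 adjacent exactly to 2 and 3. -/
def E6 : SimpleGraph (Fin 6) := SimpleGraph.fromRel (fun a b =>
  (a = 0 ∧ b = 1) ∨ (a = 1 ∧ b = 2) ∨ (a = 2 ∧ b = 3) ∨ (a = 3 ∧ b = 0) ∨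
  (a = 4 ∧ b = 0) ∨ (a = 4 ∧ b = 3) ∨ (a = 5 ∧ b = 2) ∨ (a = 5 ∧ b = 3))

/-- If there is a claw configuration, a claw-free graph yields `False`. -/
lemma no_claw_aux {V : Type*} {U : SimpleGraph V} (hU : ClawFree U) (c y z w : V)
    (hcy : U.Adj c y) (hcz : U.Adj c z) (hcw : U.Adj c w)
    (hyz : y ≠ z) (hyw : y ≠ w) (hzw : z ≠ w)
    (nyz : ¬U.Adj y z) (nyw : ¬U.Adj y w) (nzw : ¬U.Adj z w) : False := by
  apply hU.elim'
  refine ⟨⟨![c, y, z, w], ?_⟩, ?_⟩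
  · intro a b hab
    fin_cases a <;> fin_cases b <;>
      simp_all [hcy.ne, hcz.ne, hcw.ne, Matrix.cons_val_zero, Matrix.cons_val_one]
  · intro a b
    have nzy : ¬U.Adj z y := fun h => nyz h.symm
    have nwy : ¬U.Adj w y := fun h => nyw h.symm
    have nwz : ¬U.Adj w z := fun h => nzw h.symm
    show U.Adj (![c, y, z, w] a) (![c, y, z, w] b) ↔ claw.Adj a b
    fin_cases a <;> fin_cases b <;>
      simp_all [claw, hcy.symm, hcz.symm, hcw.symm, hcy.ne', hcz.ne', hcw.ne',
        U.irrefl]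

lemma bull_config {V : Type*} (U : SimpleGraph V) (S : Set V) (x a1 a2 b1 b2 : V)
    (hS : S = {x, a1, a2, b1, b2})
    (nxb1 : x ≠ b1) (nxb2 : x ≠ b2) (nb12 : b1 ≠ b2) (na1b2 : a1 ≠ b2) (na2b1 : a2 ≠ b1)
    (e1 : U.Adj x a1) (e2 : U.Adj x a2) (e3 : U.Adj a1 a2)
    (e4 : U.Adj a1 b1) (e5 : U.Adj a2 b2)
    (m1 : ¬U.Adj x b1) (m2 : ¬U.Adj x b2) (m3 : ¬U.Adj b1 b2)
    (m4 : ¬U.Adj a1 b2) (m5 : ¬U.Adj a2 b1) :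
    Nonempty (U.induce S ≃g B5) := by
  subst hS
  set S : Set V := {x, a1, a2, b1, b2} with hSdef
  have hx : x ∈ S := by simp [hSdef]
  have ha1 : a1 ∈ S := by simp [hSdef]
  have ha2 : a2 ∈ S := by simp [hSdef]
  have hb1 : b1 ∈ S := by simp [hSdef]
  have hb2 : b2 ∈ S := by simp [hSdef]
  let f : Fin 5 → S := ![⟨x, hx⟩, ⟨a1, ha1⟩, ⟨a2, ha2⟩, ⟨b1, hb1⟩, ⟨b2, hb2⟩]
  have hinj : Function.Injective f := by
    intro a b hab
    fin_cases a <;> fin_cases b <;>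
      simp_all [f, Subtype.ext_iff, e1.ne, e2.ne, e3.ne, e4.ne, e5.ne,
        nxb1, nxb2, nb12, na1b2, na2b1,
        e1.ne', e2.ne', e3.ne', e4.ne', e5.ne',
        nxb1.symm, nxb2.symm, nb12.symm, na1b2.symm, na2b1.symm]
  have hsurj : Function.Surjective f := by
    rintro ⟨v, hv⟩
    simp only [hSdef, Set.mem_insert_iff, Set.mem_singleton_iff] at hv
    rcases hv with rfl | rfl | rfl | rfl | rfl
    · exact ⟨0, rfl⟩
    · exact ⟨1, rfl⟩
    · exact ⟨2, rfl⟩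
    · exact ⟨3, rfl⟩
    · exact ⟨4, rfl⟩
  refine ⟨(SimpleGraph.Iso.symm ⟨Equiv.ofBijective f ⟨hinj, hsurj⟩, ?_⟩)⟩
  have m1' : ¬U.Adj b1 x := fun h => m1 h.symm
  have m2' : ¬U.Adj b2 x := fun h => m2 h.symm
  have m3' : ¬U.Adj b2 b1 := fun h => m3 h.symm
  have m4' : ¬U.Adj b2 a1 := fun h => m4 h.symm
  have m5' : ¬U.Adj b1 a2 := fun h => m5 h.symm
  intro a b
  show (U.induce S).Adj (f a) (f b) ↔ B5.Adj a b
  fin_cases a <;> fin_cases b <;>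
    simp_all [f, comap_adj, B5, e1.symm, e2.symm, e3.symm, e4.symm, e5.symm,
      m1', m2', m3', m4', m5', U.irrefl]

lemma two_more {V : Type*} {A : Set V} {x : V} (hA3 : A.ncard = 3) (hxA : x ∈ A) :
    ∃ a1 a2, a1 ≠ a2 ∧ x ≠ a1 ∧ x ≠ a2 ∧ A = {x, a1, a2} := by
  obtain ⟨a, b, c, hab, hac, hbc, rfl⟩ := Set.ncard_eq_three.mp hA3
  simp only [Set.mem_insert_iff, Set.mem_singleton_iff] at hxA
  rcases hxA with rfl | rfl | rfl
  · exact ⟨b, c, hbc, hab, hac, rfl⟩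
  · exact ⟨a, c, hac, hab.symm, hbc, by ext; simp; tauto⟩
  · exact ⟨a, b, hab, hac.symm, hbc.symm, by ext; simp; tauto⟩

/-- If `U` and its complement are claw-free, and `U` contains a triangle `A`
    and a 3-element independent set `B` with exactly one vertex in common, then
    the subgraph induced on `A ∪ B` is isomorphic to the bull `B5`. -/
theorem clawfree_triangle_indep_bull {V : Type*} [Fintype V] (U : SimpleGraph V)
    (h : ClawFree U ∧ ClawFree Uᶜ) (A B : Set V)
    (hA3 : A.ncard = 3) (hA : U.IsClique A)
    (hB3 : B.ncard = 3) (hB : Uᶜ.IsClique B)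
    (x : V) (hx : A ∩ B = {x}) :
    Nonempty (U.induce (A ∪ B) ≃g B5) := by
  obtain ⟨hU, hUc⟩ := h
  have hxA : x ∈ A := (hx ▸ (Set.mem_singleton x) : x ∈ A ∩ B).1
  have hxB : x ∈ B := (hx ▸ (Set.mem_singleton x) : x ∈ A ∩ B).2
  obtain ⟨a1, a2, ha12, hxa1, hxa2, hAeq⟩ := two_more hA3 hxA
  obtain ⟨b1, b2, hb12, hxb1, hxb2, hBeq⟩ := two_more hB3 hxB
  have ha1A : a1 ∈ A := by simp [hAeq]
  have ha2A : a2 ∈ A := by simp [hAeq]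
  have hb1B : b1 ∈ B := by simp [hBeq]
  have hb2B : b2 ∈ B := by simp [hBeq]
  -- a's are not in B
  have haB : ∀ a, a ∈ A → x ≠ a → a ∉ B := by
    intro a haA hxa haB'
    have : a ∈ A ∩ B := ⟨haA, haB'⟩
    rw [hx] at this
    exact hxa this.symm
  have na1b1 : a1 ≠ b1 := fun h => haB a1 ha1A hxa1 (h ▸ hb1B)
  have na1b2 : a1 ≠ b2 := fun h => haB a1 ha1A hxa1 (h ▸ hb2B)
  have na2b1 : a2 ≠ b1 := fun h => haB a2 ha2A hxa2 (h ▸ hb1B)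
  have na2b2 : a2 ≠ b2 := fun h => haB a2 ha2A hxa2 (h ▸ hb2B)
  -- edges in the triangle
  have e1 : U.Adj x a1 := hA hxA ha1A hxa1
  have e2 : U.Adj x a2 := hA hxA ha2A hxa2
  have e3 : U.Adj a1 a2 := hA ha1A ha2A ha12
  -- non-edges from the independent set
  have m1 : ¬U.Adj x b1 := ((compl_adj U x b1).mp (hB hxB hb1B hxb1)).2
  have m2 : ¬U.Adj x b2 := ((compl_adj U x b2).mp (hB hxB hb2B hxb2)).2
  have m3 : ¬U.Adj b1 b2 := ((compl_adj U b1 b2).mp (hB hb1B hb2B hb12)).2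
  -- each a_i adjacent to at most one of b1,b2 (claw-freeness of U)
  have atmost : ∀ a, U.Adj x a → ¬(U.Adj a b1 ∧ U.Adj a b2) := by
    rintro a hxa ⟨h1, h2⟩
    exact no_claw_aux hU a x b1 b2 hxa.symm h1 h2 hxb1 hxb2 hb12 m1 m2 m3
  -- each b_i adjacent to at least one of a1,a2 (claw-freeness of Uᶜ)
  have atleast : ∀ b, b ∈ B → x ≠ b → U.Adj a1 b ∨ U.Adj a2 b := by
    intro b hbB hxb
    by_contra hcon
    push_neg at hcon
    have nb1 : b ≠ a1 := fun h => haB a1 ha1A hxa1 (h ▸ hbB)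
    have nb2 : b ≠ a2 := fun h => haB a2 ha2A hxa2 (h ▸ hbB)
    have cbx : Uᶜ.Adj b x := (compl_adj U b x).mpr
      ⟨hxb.symm, fun h => ((compl_adj U x b).mp (hB hxB hbB hxb)).2 h.symm⟩
    have cba1 : Uᶜ.Adj b a1 := (compl_adj U b a1).mpr ⟨nb1, fun h => hcon.1 h.symm⟩
    have cba2 : Uᶜ.Adj b a2 := (compl_adj U b a2).mpr ⟨nb2, fun h => hcon.2 h.symm⟩
    have nxa1' : ¬Uᶜ.Adj x a1 := fun h => ((compl_adj U x a1).mp h).2 e1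
    have nxa2' : ¬Uᶜ.Adj x a2 := fun h => ((compl_adj U x a2).mp h).2 e2
    have na12' : ¬Uᶜ.Adj a1 a2 := fun h => ((compl_adj U a1 a2).mp h).2 e3
    exact no_claw_aux hUc b x a1 a2 cbx cba1 cba2 hxa1 hxa2 ha12 nxa1' nxa2' na12'
  have hAB : A ∪ B = {x, a1, a2, b1, b2} := by
    rw [hAeq, hBeq]; ext; simp; tauto
  by_cases h11 : U.Adj a1 b1
  · have m4 : ¬U.Adj a1 b2 := fun h => atmost a1 e1 ⟨h11, h⟩
    have e5 : U.Adj a2 b2 := by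
      rcases atleast b2 hb2B hxb2 with h | h
      · exact absurd h m4
      · exact h
    have m5 : ¬U.Adj a2 b1 := fun h => atmost a2 e2 ⟨h, e5⟩
    exact bull_config U (A ∪ B) x a1 a2 b1 b2 hAB hxb1 hxb2 hb12 na1b2 na2b1
      e1 e2 e3 h11 e5 m1 m2 m3 m4 m5
  · have e4 : U.Adj a1 b2 := by
      rcases atleast b2 hb2B hxb2 with h | h
      · exact h
      · -- if a2 ~ b2, still need a1 or a2 ~ b1; a1 not, so a2 ~ b1, but then a2 claw
        rcases atleast b1 hb1B hxb1 with h' | h'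
        · exact absurd h' h11
        · exact absurd (atmost a2 e2 ⟨h', h⟩) (fun t => t)
    have m4' : ¬U.Adj a1 b1 := h11
    have e5 : U.Adj a2 b1 := by
      rcases atleast b1 hb1B hxb1 with h | h
      · exact absurd h h11
      · exact h
    have m5' : ¬U.Adj a2 b2 := fun h => atmost a2 e2 ⟨e5, h⟩
    have hAB' : A ∪ B = {x, a1, a2, b2, b1} := by
      rw [hAB]; ext; simp; tauto
    exact bull_config U (A ∪ B) x a1 a2 b2 b1 hAB' hxb2 hxb1 hb12.symm na1b1 na2b2
      e1 e2 e3 e4 e5 m2 m1 (fun h => m3 h.symm) m4' m5'
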